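/- Let α > 0 and θ > 2. Every coefficient array β satisfying the condition A^α_θ satisfies the weak Besov condition W_{2/(1+2α)}. -/

import Mathlib

open scoped BigOperators

/-- A coefficient array `β` is square-summable if `Σ_{j,k} β_{j,k}² < ∞`. -/
def SqSummable (β : ℕ → ℕ → ℝ) : Prop :=
  Summable fun j : ℕ => ∑ k ∈ Finset.range (2 ^ j), (β j k) ^ 2

/-- `N(J,j) = min(⌊2^J (j−J+1)^{−θ}⌋, 2^j)`. -/
noncomputable def NJj (θ : ℝ) (J j : ℕ) : ℕ :=
  min ⌊(2 : ℝ) ^ J * ((j : ℝ) - (J : ℝ) + 1) ^ (-θ)⌋₊ (2 ^ j)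

/-- `t_{j,J}(β)`: the minimum over subsets `A` of `{0,…,2^j−1}` of cardinality `N(J,j)`
of `Σ_{k ∉ A} β_{j,k}²`, i.e. the sum of squares of all but the `N(J,j)` largest
`|β_{j,k}|` at level `j`. -/
noncomputable def tTail (β : ℕ → ℕ → ℝ) (θ : ℝ) (J j : ℕ) : ℝ :=
  sInf {x : ℝ | ∃ A : Finset ℕ, A ⊆ Finset.range (2 ^ j) ∧ A.card = NJj θ J j ∧
    x = ∑ k ∈ Finset.range (2 ^ j) \ A, (β j k) ^ 2}

/-- The condition `A^α_θ`. -/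
def CondA (β : ℕ → ℕ → ℝ) (α θ : ℝ) : Prop :=
  ∃ C : ℝ, ∀ J : ℕ,
    (2 : ℝ) ^ (2 * (J : ℝ) * α) *
      ∑' j : ℕ, (if J ≤ j then tTail β θ J j else 0) ≤ C

/-- The weak Besov condition `W_{2/(1+2α)}`. -/
def CondW (β : ℕ → ℕ → ℝ) (α : ℝ) : Prop :=
  ∃ C : ℝ, ∀ u : ℝ, 0 < u →
    {q : ℕ × ℕ | q.2 < 2 ^ q.1 ∧ u < |β q.1 q.2|}.Finite ∧
      u ^ (2 / (1 + 2 * α)) *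
        ({q : ℕ × ℕ | q.2 < 2 ^ q.1 ∧ u < |β q.1 q.2|}.ncard : ℝ) ≤ C

lemma tTail_set_nonempty (β : ℕ → ℕ → ℝ) (θ : ℝ) (J j : ℕ) :
    {x : ℝ | ∃ A : Finset ℕ, A ⊆ Finset.range (2 ^ j) ∧ A.card = NJj θ J j ∧
      x = ∑ k ∈ Finset.range (2 ^ j) \ A, (β j k) ^ 2}.Nonempty := by
  obtain ⟨A, hA, hcard⟩ := Finset.exists_subset_card_eq
    (show NJj θ J j ≤ (Finset.range (2 ^ j)).card by
      rw [Finset.card_range]; exact min_le_right _ _)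
  exact ⟨_, A, hA, hcard, rfl⟩

lemma tTail_lb (β : ℕ → ℕ → ℝ) (θ : ℝ) (J j : ℕ) {c : ℝ}
    (hc : ∀ A : Finset ℕ, A ⊆ Finset.range (2 ^ j) → A.card = NJj θ J j →
      c ≤ ∑ k ∈ Finset.range (2 ^ j) \ A, (β j k) ^ 2) :
    c ≤ tTail β θ J j :=
  le_csInf (tTail_set_nonempty β θ J j) (by rintro x ⟨A, h1, h2, rfl⟩; exact hc A h1 h2)

lemma tTail_nonneg (β : ℕ → ℕ → ℝ) (θ : ℝ) (J j : ℕ) : 0 ≤ tTail β θ J j :=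
  tTail_lb β θ J j (fun A _ _ => Finset.sum_nonneg fun k _ => sq_nonneg _)

lemma tTail_le_sum (β : ℕ → ℕ → ℝ) (θ : ℝ) (J j : ℕ) :
    tTail β θ J j ≤ ∑ k ∈ Finset.range (2 ^ j), (β j k) ^ 2 := by
  obtain ⟨x, A, h1, h2, rfl⟩ := tTail_set_nonempty β θ J j
  refine le_trans (csInf_le ⟨0, ?_⟩ ⟨A, h1, h2, rfl⟩) ?_
  · rintro y ⟨A', _, _, rfl⟩; exact Finset.sum_nonneg fun k _ => sq_nonneg _
  · exact Finset.sum_le_sum_of_subset_of_nonneg (Finset.sdiff_subset)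
      (fun k _ _ => sq_nonneg _)

/-- Key counting lemma: card of big coefficients at level j. -/
lemma card_le (β : ℕ → ℕ → ℝ) (θ : ℝ) (J j : ℕ) (u : ℝ) (hu : 0 < u) :
    (((Finset.range (2 ^ j)).filter (fun k => u < |β j k|)).card : ℝ) * u ^ 2 ≤
      (NJj θ J j : ℝ) * u ^ 2 + tTail β θ J j := by
  set B := (Finset.range (2 ^ j)).filter (fun k => u < |β j k|) with hB
  rw [← sub_le_iff_le_add', ← sub_mul]
  refine tTail_lb β θ J j (fun A hA hcard => ?_)
  have h0 : ((B.card : ℝ) - NJj θ J j) ≤ ((B \ A).card : ℝ) := by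
    have := Finset.card_le_card_sdiff_add_card (s := B) (t := A)
    have hc : (B.card : ℝ) ≤ ((B \ A).card : ℝ) + A.card := by exact_mod_cast this
    rw [← hcard]; linarith
  calc ((B.card : ℝ) - NJj θ J j) * u ^ 2
      ≤ ((B \ A).card : ℝ) * u ^ 2 := mul_le_mul_of_nonneg_right h0 (sq_nonneg u)
    _ = ∑ k ∈ B \ A, u ^ 2 := by rw [Finset.sum_const, nsmul_eq_mul, mul_comm]
    _ ≤ ∑ k ∈ B \ A, (β j k) ^ 2 := by
        refine Finset.sum_le_sum (fun k hk => ?_)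
        have hk' : u < |β j k| := (Finset.mem_filter.mp (Finset.mem_sdiff.mp hk).1).2
        calc u ^ 2 ≤ |β j k| ^ 2 := by nlinarith [abs_nonneg (β j k)]
          _ = (β j k) ^ 2 := sq_abs _
    _ ≤ ∑ k ∈ Finset.range (2 ^ j) \ A, (β j k) ^ 2 :=
        Finset.sum_le_sum_of_subset_of_nonneg
          (Finset.sdiff_subset_sdiff (Finset.filter_subset _ _) le_rfl)
          (fun k _ _ => sq_nonneg _)

lemma sum_shift (f : ℕ → ℝ) (J : ℕ) : ∀ M : ℕ,
    ∑ j ∈ Finset.range M, (if J ≤ j then f (j - J) else 0) =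
      ∑ m ∈ Finset.range (M - J), f m := by
  intro M
  induction M with
  | zero => simp
  | succ M ih =>
    rw [Finset.sum_range_succ, ih]
    by_cases h : J ≤ M
    · rw [if_pos h, show M + 1 - J = (M - J) + 1 by omega, Finset.sum_range_succ]
    · rw [if_neg h, show M + 1 - J = M - J by omega, add_zero]

lemma basel (n : ℕ) : ∑ m ∈ Finset.range n, 1 / ((m : ℝ) + 1) ^ 2 ≤ 2 := by
  have key : ∀ n : ℕ, ∑ m ∈ Finset.range n, 1 / ((m : ℝ) + 1) ^ 2 ≤ 2 - 2 / ((n : ℝ) + 1) := by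
    intro n
    induction n with
    | zero => norm_num
    | succ n ih =>
      rw [Finset.sum_range_succ]
      have h1 : (0:ℝ) < (n : ℝ) + 1 := by positivity
      have h2 : (0:ℝ) < (n : ℝ) + 2 := by positivity
      have : 1 / ((n : ℝ) + 1) ^ 2 ≤ 2 / ((n : ℝ) + 1) - 2 / ((n : ℝ) + 2) := by
        rw [div_sub_div _ _ (ne_of_gt h1) (ne_of_gt h2), div_le_div_iff₀ (by positivity) (by positivity)]
        ring_nf; nlinarith
      push_cast
      have : ((n:ℝ) + 1 + 1) = (n:ℝ) + 2 := by ring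
      rw [this]
      linarith [ih]
  calc ∑ m ∈ Finset.range n, 1 / ((m : ℝ) + 1) ^ 2 ≤ 2 - 2 / ((n : ℝ) + 1) := key n
    _ ≤ 2 := by
        have h : (0:ℝ) < 2 / ((n:ℝ)+1) := by positivity
        linarith

lemma NJj_le (θ : ℝ) (hθ : 2 < θ) {J j : ℕ} (h : J ≤ j) :
    (NJj θ J j : ℝ) ≤ (2 : ℝ) ^ J * (1 / (((j - J : ℕ) : ℝ) + 1) ^ 2) := by
  have hm : ((j : ℝ) - (J : ℝ) + 1) = ((j - J : ℕ) : ℝ) + 1 := by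
    push_cast [h]; ring
  set m : ℝ := ((j - J : ℕ) : ℝ) with hmdef
  have hm0 : (0 : ℝ) ≤ m := Nat.cast_nonneg _
  have hm1 : (1 : ℝ) ≤ m + 1 := by linarith
  have hx : (0:ℝ) ≤ (2 : ℝ) ^ J * ((j : ℝ) - (J : ℝ) + 1) ^ (-θ) := by
    rw [hm]
    positivity
  have h1 : (NJj θ J j : ℝ) ≤ (2 : ℝ) ^ J * ((j : ℝ) - (J : ℝ) + 1) ^ (-θ) := by
    refine le_trans ?_ (Nat.floor_le hx)
    exact Nat.cast_le.mpr (min_le_left _ _)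
  refine h1.trans ?_
  rw [hm]
  refine mul_le_mul_of_nonneg_left ?_ (by positivity)
  have h2 : (m + 1) ^ (-θ) ≤ (m + 1) ^ (-(2:ℝ)) :=
    Real.rpow_le_rpow_of_exponent_le hm1 (by linarith)
  refine h2.trans_eq ?_
  rw [Real.rpow_neg (by linarith), show ((2:ℝ)) = ((2:ℕ):ℝ) by norm_num,
    Real.rpow_natCast, one_div]

/-- The master level-sum bound, uniform in the cutoff `M`. -/
lemma level_sum_bound (α θ : ℝ) (hα : 0 < α) (hθ : 2 < θ)
    (β : ℕ → ℕ → ℝ) (hβ : Summable fun j : ℕ => ∑ k ∈ Finset.range (2 ^ j), (β j k) ^ 2)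
    (CA : ℝ)
    (hCA : ∀ J : ℕ, (2 : ℝ) ^ (2 * (J : ℝ) * α) *
      ∑' j : ℕ, (if J ≤ j then tTail β θ J j else 0) ≤ CA)
    (u : ℝ) (hu : 0 < u) (M : ℕ) :
    u ^ (2 / (1 + 2 * α)) *
      ∑ j ∈ Finset.range M,
        (((Finset.range (2 ^ j)).filter (fun k => u < |β j k|)).card : ℝ) ≤
      6 + max CA 0 + ∑' j : ℕ, ∑ k ∈ Finset.range (2 ^ j), (β j k) ^ 2 := by
  set s : ℕ → ℝ := fun j => ∑ k ∈ Finset.range (2 ^ j), (β j k) ^ 2 with hs_def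
  have hs0 : ∀ j, 0 ≤ s j := fun j => Finset.sum_nonneg fun k _ => sq_nonneg _
  set S : ℝ := ∑' j, s j with hS_def
  have hS0 : 0 ≤ S := tsum_nonneg hs0
  set r : ℝ := 2 / (1 + 2 * α) with hr_def
  have h1α : (0:ℝ) < 1 + 2 * α := by linarith
  have hr0 : 0 < r := by positivity
  have hr2 : r ≤ 2 := by
    rw [hr_def, div_le_iff₀ h1α]; linarith
  have hrkey : r * (2 * α) - 2 = -r := by
    rw [hr_def]; field_simp; ring
  set B : ℕ → Finset ℕ := fun j => (Finset.range (2 ^ j)).filter (fun k => u < |β j k|)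
    with hB_def
  have hC0 : (0:ℝ) ≤ max CA 0 := le_max_right _ _
  by_cases hu1 : 1 ≤ u
  · -- Chebyshev case
    have cheb : ∀ j, ((B j).card : ℝ) ≤ s j / u ^ 2 := by
      intro j
      rw [le_div_iff₀ (by positivity)]
      calc ((B j).card : ℝ) * u ^ 2 = ∑ _k ∈ B j, u ^ 2 := by
            rw [Finset.sum_const, nsmul_eq_mul, mul_comm]
        _ ≤ ∑ k ∈ B j, (β j k) ^ 2 := by
            refine Finset.sum_le_sum fun k hk => ?_
            have hk' : u < |β j k| := (Finset.mem_filter.mp hk).2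
            nlinarith [abs_nonneg (β j k), sq_abs (β j k)]
        _ ≤ s j := Finset.sum_le_sum_of_subset_of_nonneg (Finset.filter_subset _ _)
            (fun k _ _ => sq_nonneg _)
    have h1 : ∑ j ∈ Finset.range M, ((B j).card : ℝ) ≤ S / u ^ 2 := by
      calc ∑ j ∈ Finset.range M, ((B j).card : ℝ) ≤ ∑ j ∈ Finset.range M, s j / u ^ 2 :=
            Finset.sum_le_sum fun j _ => cheb j
        _ = (∑ j ∈ Finset.range M, s j) / u ^ 2 := by rw [Finset.sum_div]
        _ ≤ S / u ^ 2 := by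
            apply div_le_div_of_nonneg_right ?_ (by positivity) |>.trans_eq rfl
            exact Summable.sum_le_tsum _ (fun j _ => hs0 j) hβ
    have h2 : u ^ r ≤ u ^ 2 := by
      calc u ^ r ≤ u ^ (2:ℝ) := Real.rpow_le_rpow_of_exponent_le hu1 hr2
        _ = u ^ (2:ℕ) := by rw [← Real.rpow_natCast u 2]; norm_num
    calc u ^ r * ∑ j ∈ Finset.range M, ((B j).card : ℝ)
        ≤ u ^ 2 * (S / u ^ 2) := by
          apply mul_le_mul h2 h1 (Finset.sum_nonneg fun j _ => Nat.cast_nonneg _) (by positivity)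
      _ = S := by field_simp
      _ ≤ 6 + max CA 0 + S := by linarith
  · -- small u case
    push_neg at hu1
    set v : ℝ := u ^ (-r) with hv_def
    have hv0 : 0 < v := Real.rpow_pos_of_pos hu _
    have hv1 : 1 < v := by
      rw [hv_def]
      exact (Real.one_lt_rpow_iff_of_pos hu).mpr (Or.inr ⟨hu1, by linarith⟩)
    set J : ℕ := ⌈Real.logb 2 v⌉₊ with hJ_def
    have hlog0 : 0 ≤ Real.logb 2 v := Real.logb_nonneg one_lt_two hv1.le
    have hJ1 : v ≤ (2:ℝ) ^ J := by
      calc v = (2:ℝ) ^ Real.logb 2 v := (Real.rpow_logb two_pos (by norm_num) hv0).symm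
        _ ≤ (2:ℝ) ^ ((J:ℕ):ℝ) := Real.rpow_le_rpow_of_exponent_le one_le_two (Nat.le_ceil _)
        _ = (2:ℝ) ^ J := Real.rpow_natCast 2 J
    have hJ2 : (2:ℝ) ^ J ≤ 2 * v := by
      have h := Nat.ceil_lt_add_one hlog0
      calc (2:ℝ) ^ J = (2:ℝ) ^ ((J:ℕ):ℝ) := (Real.rpow_natCast 2 J).symm
        _ ≤ (2:ℝ) ^ (Real.logb 2 v + 1) :=
            Real.rpow_le_rpow_of_exponent_le one_le_two (le_of_lt h)
        _ = (2:ℝ) ^ Real.logb 2 v * (2:ℝ) ^ (1:ℝ) := Real.rpow_add two_pos _ _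
        _ = 2 * v := by rw [Real.rpow_logb two_pos (by norm_num) hv0, Real.rpow_one]; ring
    -- bound on the tail tsum
    have hite_summable : Summable (fun j => if J ≤ j then tTail β θ J j else 0) := by
      refine Summable.of_nonneg_of_le (fun j => ?_) (fun j => ?_) hβ
      · split <;> [exact tTail_nonneg β θ J j; exact le_rfl]
      · split <;> [exact tTail_le_sum β θ J j; exact hs0 j]
    have hT0 : 0 ≤ ∑' j, (if J ≤ j then tTail β θ J j else 0) := by
      refine tsum_nonneg fun j => ?_
      split <;> [exact tTail_nonneg β θ J j; exact le_rfl]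
    have hvpow : v ^ (2 * α) ≤ (2:ℝ) ^ (2 * (J:ℝ) * α) := by
      have h1 : (2:ℝ) ^ (2 * (J:ℝ) * α) = ((2:ℝ) ^ ((J:ℕ):ℝ)) ^ (2 * α) := by
        rw [← Real.rpow_mul (by norm_num)]; ring_nf
      rw [h1, Real.rpow_natCast 2 J]
      exact Real.rpow_le_rpow hv0.le hJ1 (by positivity)
    have hTbound : ∑' j, (if J ≤ j then tTail β θ J j else 0) ≤ max CA 0 * u ^ (r * (2 * α)) := by
      have h1 : v ^ (2 * α) * ∑' j, (if J ≤ j then tTail β θ J j else 0) ≤ max CA 0 :=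
        le_trans (mul_le_mul_of_nonneg_right hvpow hT0) (le_trans (hCA J) (le_max_left _ _))
      have h2 : u ^ (r * (2 * α)) * v ^ (2 * α) = 1 := by
        rw [hv_def, ← Real.rpow_mul hu.le, ← Real.rpow_add hu,
          show r * (2 * α) + -r * (2 * α) = 0 by ring, Real.rpow_zero]
      have h3 : 0 ≤ u ^ (r * (2 * α)) := Real.rpow_nonneg hu.le _
      calc ∑' j, (if J ≤ j then tTail β θ J j else 0)
          = u ^ (r * (2 * α)) * v ^ (2 * α) * ∑' j, (if J ≤ j then tTail β θ J j else 0) := by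
            rw [h2, one_mul]
        _ ≤ u ^ (r * (2 * α)) * max CA 0 := by
            rw [mul_assoc]; exact mul_le_mul_of_nonneg_left h1 h3
        _ = max CA 0 * u ^ (r * (2 * α)) := mul_comm _ _
    -- per-level bound
    have hgj : ∀ j, ((B j).card : ℝ) ≤
        (if j < J then (2:ℝ)^j else 0) + (if J ≤ j then ((NJj θ J j : ℝ)) else 0) +
          (if J ≤ j then tTail β θ J j else 0) / u ^ 2 := by
      intro j
      by_cases hjJ : J ≤ j
      · rw [if_neg (not_lt.mpr hjJ), if_pos hjJ, if_pos hjJ, zero_add]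
        have h := card_le β θ J j u hu
        have hu2 : (0:ℝ) < u ^ 2 := by positivity
        refine ((le_div_iff₀ hu2).mpr h).trans_eq ?_
        rw [add_div, mul_div_cancel_right₀ _ (ne_of_gt hu2)]
      · rw [if_pos (not_le.mp hjJ), if_neg hjJ, if_neg hjJ, add_zero, zero_div, add_zero]
        have : (B j).card ≤ 2 ^ j := by
          calc (B j).card ≤ (Finset.range (2 ^ j)).card := Finset.card_filter_le _ _
            _ = 2 ^ j := Finset.card_range _
        exact_mod_cast this
    have hsum_g : ∑ j ∈ Finset.range M, ((B j).card : ℝ) ≤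
        (2:ℝ)^J + (2:ℝ)^J * 2 + max CA 0 * u ^ (r * (2 * α)) / u ^ 2 := by
      have step := Finset.sum_le_sum (fun j (_ : j ∈ Finset.range M) => hgj j)
      refine step.trans ?_
      rw [Finset.sum_add_distrib, Finset.sum_add_distrib]
      have b1 : ∑ j ∈ Finset.range M, (if j < J then (2:ℝ)^j else 0) ≤ (2:ℝ)^J := by
        calc ∑ j ∈ Finset.range M, (if j < J then (2:ℝ)^j else 0)
            ≤ ∑ j ∈ Finset.range (max M J), (if j < J then (2:ℝ)^j else 0) := by
              refine Finset.sum_le_sum_of_subset_of_nonneg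
                (Finset.range_subset_range.mpr (le_max_left _ _)) (fun j _ _ => ?_)
              split <;> positivity
          _ = ∑ j ∈ Finset.range J, (2:ℝ)^j := by
              rw [← Finset.sum_subset (Finset.range_subset_range.mpr (le_max_right M J))
                (fun j _ hj => if_neg (by simpa using hj))]
              exact Finset.sum_congr rfl fun j hj => if_pos (Finset.mem_range.mp hj)
          _ = ((2:ℝ)^J - 1) / (2 - 1) := geom_sum_eq (by norm_num) J
          _ ≤ (2:ℝ)^J := by norm_num
      have b2 : ∑ j ∈ Finset.range M, (if J ≤ j then ((NJj θ J j : ℝ)) else 0) ≤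
          (2:ℝ)^J * 2 := by
        calc ∑ j ∈ Finset.range M, (if J ≤ j then ((NJj θ J j : ℝ)) else 0)
            ≤ ∑ j ∈ Finset.range M,
                (if J ≤ j then (2:ℝ)^J * (1 / (((j - J : ℕ) : ℝ) + 1) ^ 2) else 0) := by
              refine Finset.sum_le_sum fun j _ => ?_
              by_cases hjJ : J ≤ j
              · rw [if_pos hjJ, if_pos hjJ]; exact NJj_le θ hθ hjJ
              · rw [if_neg hjJ, if_neg hjJ]
          _ = ∑ m ∈ Finset.range (M - J), (2:ℝ)^J * (1 / ((m : ℝ) + 1) ^ 2) :=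
              sum_shift (fun m => (2:ℝ)^J * (1 / ((m : ℝ) + 1) ^ 2)) J M
          _ = (2:ℝ)^J * ∑ m ∈ Finset.range (M - J), 1 / ((m : ℝ) + 1) ^ 2 := by
              rw [Finset.mul_sum]
          _ ≤ (2:ℝ)^J * 2 := by
              refine mul_le_mul_of_nonneg_left (basel _) (by positivity)
      have b3 : ∑ j ∈ Finset.range M, (if J ≤ j then tTail β θ J j else 0) / u ^ 2 ≤
          max CA 0 * u ^ (r * (2 * α)) / u ^ 2 := by
        rw [← Finset.sum_div]
        refine div_le_div_of_nonneg_right ?_ (by positivity) |>.trans_eq rfl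
        exact le_trans (Summable.sum_le_tsum _ (fun j _ => by
          split <;> [exact tTail_nonneg β θ J j; exact le_rfl]) hite_summable) hTbound
      linarith
    -- final assembly
    have hup : u ^ (r * (2 * α)) / u ^ 2 = v := by
      rw [hv_def, show (u:ℝ) ^ (2:ℕ) = u ^ ((2:ℕ):ℝ) from (Real.rpow_natCast u 2).symm,
        ← Real.rpow_sub hu]
      norm_num [hrkey]
    have htotal : ∑ j ∈ Finset.range M, ((B j).card : ℝ) ≤ (6 + max CA 0) * v := by
      calc ∑ j ∈ Finset.range M, ((B j).card : ℝ)
          ≤ (2:ℝ)^J + (2:ℝ)^J * 2 + max CA 0 * u ^ (r * (2 * α)) / u ^ 2 := hsum_g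
        _ = 3 * (2:ℝ)^J + max CA 0 * v := by rw [mul_div_assoc, hup]; ring
        _ ≤ 3 * (2 * v) + max CA 0 * v := by nlinarith
        _ = (6 + max CA 0) * v := by ring
    have hur0 : 0 ≤ u ^ r := Real.rpow_nonneg hu.le _
    have huv : u ^ r * v = 1 := by
      rw [hv_def, ← Real.rpow_add hu, add_neg_cancel, Real.rpow_zero]
    calc u ^ r * ∑ j ∈ Finset.range M, ((B j).card : ℝ)
        ≤ u ^ r * ((6 + max CA 0) * v) := mul_le_mul_of_nonneg_left htotal hur0
      _ = (6 + max CA 0) * (u ^ r * v) := by ring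
      _ = 6 + max CA 0 := by rw [huv, mul_one]
      _ ≤ 6 + max CA 0 + S := by linarith

/-- the inclusion `A^α_θ ⊆ W_{2/(1+2α)}`. -/
theorem stmt_11 (α θ : ℝ) (hα : 0 < α) (hθ : 2 < θ)
    (β : ℕ → ℕ → ℝ) (hβ : SqSummable β) (hA : CondA β α θ) :
    CondW β α := by

  obtain ⟨CA, hCA⟩ := hA
  refine ⟨6 + max CA 0 + ∑' j : ℕ, ∑ k ∈ Finset.range (2 ^ j), (β j k) ^ 2, fun u hu => ?_⟩
  have hs0 : ∀ j, 0 ≤ ∑ k ∈ Finset.range (2 ^ j), (β j k) ^ 2 :=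
    fun j => Finset.sum_nonneg fun k _ => sq_nonneg _
  -- finiteness
  have hfin : {q : ℕ × ℕ | q.2 < 2 ^ q.1 ∧ u < |β q.1 q.2|}.Finite := by
    have htend := hβ.tendsto_atTop_zero
    have hev : ∀ᶠ j in Filter.atTop,
        (∑ k ∈ Finset.range (2 ^ j), (β j k) ^ 2) < u ^ 2 :=
      htend.eventually_lt_const (by positivity)
    obtain ⟨N, hN⟩ := Filter.eventually_atTop.mp hev
    refine Set.Finite.subset ((Set.finite_Iio N).prod (Set.finite_Iio (2 ^ N))) ?_
    rintro ⟨j, k⟩ ⟨hk, hb⟩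
    have hjN : j < N := by
      by_contra hc
      push_neg at hc
      have h1 := hN j hc
      have h2 : (β j k) ^ 2 ≤ ∑ k' ∈ Finset.range (2 ^ j), (β j k') ^ 2 :=
        Finset.single_le_sum (f := fun k' => (β j k') ^ 2) (fun k' _ => sq_nonneg _)
          (Finset.mem_range.mpr hk)
      nlinarith [abs_nonneg (β j k), sq_abs (β j k)]
    exact ⟨hjN, lt_of_lt_of_le hk (Nat.pow_le_pow_right (by norm_num) hjN.le)⟩
  refine ⟨hfin, ?_⟩
  -- reduce ncard to a finite level sum
  set F := hfin.toFinset with hF_def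
  have hncard : ({q : ℕ × ℕ | q.2 < 2 ^ q.1 ∧ u < |β q.1 q.2|}.ncard : ℝ) = (F.card : ℝ) := by
    rw [Set.ncard_eq_toFinset_card _ hfin]
  set M := F.sup Prod.fst + 1 with hM_def
  set B : ℕ → Finset ℕ := fun j => (Finset.range (2 ^ j)).filter (fun k => u < |β j k|)
    with hB_def
  have hsub : F ⊆ (Finset.range M).biUnion (fun j => {j} ×ˢ B j) := by
    intro q hq
    have hq' : q.2 < 2 ^ q.1 ∧ u < |β q.1 q.2| := by
      simpa using (Set.Finite.mem_toFinset hfin).mp hq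
    refine Finset.mem_biUnion.mpr ⟨q.1, ?_, ?_⟩
    · exact Finset.mem_range.mpr (Nat.lt_succ_of_le (Finset.le_sup (f := Prod.fst) hq))
    · refine Finset.mem_product.mpr ⟨Finset.mem_singleton_self _, ?_⟩
      exact Finset.mem_filter.mpr ⟨Finset.mem_range.mpr hq'.1, hq'.2⟩
  have hcard : (F.card : ℝ) ≤ ∑ j ∈ Finset.range M, ((B j).card : ℝ) := by
    have h1 : F.card ≤ ∑ j ∈ Finset.range M, ({j} ×ˢ B j).card :=
      le_trans (Finset.card_le_card hsub) (Finset.card_biUnion_le)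
    have h2 : ∀ j, ({j} ×ˢ B j).card = (B j).card := by
      intro j; rw [Finset.card_product, Finset.card_singleton, one_mul]
    push_cast
    calc (F.card : ℝ) ≤ (∑ j ∈ Finset.range M, ({j} ×ˢ B j).card : ℕ) := by exact_mod_cast h1
      _ = ((∑ j ∈ Finset.range M, (B j).card : ℕ) : ℝ) := by
          norm_cast; exact Finset.sum_congr rfl fun j _ => h2 j
      _ = ∑ j ∈ Finset.range M, ((B j).card : ℝ) := by push_cast; rfl
  have hur0 : 0 ≤ u ^ (2 / (1 + 2 * α)) := Real.rpow_nonneg hu.le _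
  calc u ^ (2 / (1 + 2 * α)) * ({q : ℕ × ℕ | q.2 < 2 ^ q.1 ∧ u < |β q.1 q.2|}.ncard : ℝ)
      = u ^ (2 / (1 + 2 * α)) * (F.card : ℝ) := by rw [hncard]
    _ ≤ u ^ (2 / (1 + 2 * α)) * ∑ j ∈ Finset.range M, ((B j).card : ℝ) :=
        mul_le_mul_of_nonneg_left hcard hur0
    _ ≤ 6 + max CA 0 + ∑' j : ℕ, ∑ k ∈ Finset.range (2 ^ j), (β j k) ^ 2 :=
        level_sum_bound α θ hα hθ β hβ CA hCA u hu M
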